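/- Let d ≥ 3, q ≥ 2, and l_1 = 0, l_2, …, l_{d−1} ∈ ℤ_q with l_i − l_j a unit whenever i ≠ j. Let β = (b_{i,j}) ∈ GL_{d−1}(ℤ) satisfy, for all 1 ≤ i ≠ j ≤ d−1, the identity (l_j − l_i) + ∏_{k=1}^{d−1}(t+l_k)^{b_{k,i}} − ∏_{m=1}^{d−1}(t+l_m)^{b_{m,j}} = 0 in R_d(ℤ_q). For 1 ≤ i ≤ d−1 let C(i) = Σ_{k=1}^{d−1} b_{k,i} be the i-th column sum of β. Then: (1) C(i) < 0 for at most one index i; (2) C(i) = 0 for at most one index i; and (3) if C(i) > 0 for some i, then C(j) = C(i) for every j with 1 ≤ j ≤ d−1. -/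

import Mathlib

open Polynomial

/-- The multiplicative set of `ℤ_q[t]` generated by the polynomials `t + l i`. -/
noncomputable def dlSub (q d : ℕ) (l : Fin (d-1) → ZMod q) : Submonoid (Polynomial (ZMod q)) :=
  Submonoid.closure {p | ∃ i : Fin (d-1), p = X + C (l i)}

/-- The ring `R_d(ℤ_q) = ℤ_q[t, (t+l_1)⁻¹, …, (t+l_{d-1})⁻¹]`, realized as the localization of
`ℤ_q[t]` at the multiplicative set generated by the `t + l i`. -/
abbrev Rd (q d : ℕ) (l : Fin (d-1) → ZMod q) := Localization (dlSub q d l)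

/-- The image of `t + l i` in `R_d(ℤ_q)`, as a unit. -/
noncomputable def tU (q d : ℕ) (l : Fin (d-1) → ZMod q) (i : Fin (d-1)) : (Rd q d l)ˣ :=
  (IsLocalization.map_units (M := dlSub q d l) (Rd q d l)
    ⟨X + C (l i), Submonoid.subset_closure ⟨i, rfl⟩⟩).unit

/-- The monomial `∏ i (t + l i) ^ (v i)`, as a unit of `R_d(ℤ_q)`. -/
noncomputable def monU (q d : ℕ) (l : Fin (d-1) → ZMod q) (v : Fin (d-1) → ℤ) : (Rd q d l)ˣ :=
  ∏ i, tU q d l i ^ (v i)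

/-- The condition on a `(d-1) × (d-1)` integer matrix `β = (b k i)` that, for all `i ≠ j`,
`(l j - l i) + ∏ k (t + l k)^(b k i) - ∏ k (t + l k)^(b k j) = 0` holds in `R_d(ℤ_q)`. -/
def kCond (q d : ℕ) (l : Fin (d-1) → ZMod q) (β : Matrix (Fin (d-1)) (Fin (d-1)) ℤ) : Prop :=
  ∀ i j : Fin (d-1), i ≠ j →
    algebraMap (Polynomial (ZMod q)) (Rd q d l) (C (l j - l i))
      + (monU q d l (fun k => β k i) : Rd q d l)
      - (monU q d l (fun k => β k j) : Rd q d l) = 0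

/-- The set `𝒦` of invertible integer matrices `β` such that the defining identities hold
both for the entries of `β` and for the entries of `β⁻¹`. -/
def kSet (q d : ℕ) (l : Fin (d-1) → ZMod q) : Set (Matrix.GeneralLinearGroup (Fin (d-1)) ℤ) :=
  {β | kCond q d l ↑β ∧ kCond q d l ↑(β⁻¹)}

section Aux

open HahnSeries PowerSeries

variable (q : ℕ)

/-- Units `single a 1` of the Hahn series ring. -/
noncomputable def sU (a : ℤ) : (HahnSeries ℤ (ZMod q))ˣ where
  val := HahnSeries.single a 1
  inv := HahnSeries.single (-a) 1
  val_inv := by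
    rw [HahnSeries.single_mul_single, add_neg_cancel, mul_one, HahnSeries.single_zero_one]
  inv_val := by
    rw [HahnSeries.single_mul_single, neg_add_cancel, mul_one, HahnSeries.single_zero_one]

lemma sU_mul (a b : ℤ) : sU q a * sU q b = sU q (a + b) := by
  apply Units.ext
  show HahnSeries.single a 1 * HahnSeries.single b 1 = HahnSeries.single (a+b) 1
  rw [HahnSeries.single_mul_single, mul_one]

/-- `sU` as a monoid hom from `Multiplicative ℤ`. -/
noncomputable def sHom : Multiplicative ℤ →* (HahnSeries ℤ (ZMod q))ˣ where
  toFun a := sU q (Multiplicative.toAdd a)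
  map_one' := by apply Units.ext; exact HahnSeries.single_zero_one
  map_mul' a b := (sU_mul q _ _).symm

lemma sU_zpow (a n : ℤ) : (sU q a) ^ n = sU q (n * a) := by
  have h : sU q a = sHom q (Multiplicative.ofAdd a) := rfl
  rw [h, ← map_zpow]
  show sU q (Multiplicative.toAdd (Multiplicative.ofAdd a ^ n)) = _
  rw [toAdd_zpow, toAdd_ofAdd, smul_eq_mul]

lemma sU_sum {ι : Type*} (s : Finset ι) (a : ι → ℤ) :
    ∏ i ∈ s, sU q (a i) = sU q (∑ i ∈ s, a i) := by
  classical
  induction s using Finset.induction_on with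
  | empty => apply Units.ext; exact HahnSeries.single_zero_one
  | insert _ _ h ih =>
    rw [Finset.prod_insert h, Finset.sum_insert h, ih, sU_mul]

/-- The unit `1 + r·X` of the power series ring. -/
noncomputable def psU (r : ZMod q) : (PowerSeries (ZMod q))ˣ :=
  (PowerSeries.isUnit_iff_constantCoeff.mpr (by simp)
    : IsUnit (1 + PowerSeries.X * PowerSeries.C (R := ZMod q) r)).unit

lemma psU_val (r : ZMod q) :
    (psU q r : PowerSeries (ZMod q)) = 1 + PowerSeries.X * PowerSeries.C (R := ZMod q) r :=
  IsUnit.unit_spec _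

lemma cc_psU_map (r : ZMod q) :
    Units.map (PowerSeries.constantCoeff (R := ZMod q)).toMonoidHom (psU q r) = 1 := by
  apply Units.ext
  show PowerSeries.constantCoeff (R := ZMod q) (psU q r : PowerSeries (ZMod q)) = 1
  rw [psU_val]; simp

/-- The evaluation map `ℤ_q[t] → HahnSeries ℤ (ZMod q)` sending `t` to `X⁻¹`. -/
noncomputable def EH : Polynomial (ZMod q) →+* HahnSeries ℤ (ZMod q) :=
  Polynomial.eval₂RingHom HahnSeries.C (HahnSeries.single (-1) 1)

lemma EH_gen (r : ZMod q) :
    EH q (Polynomial.X + Polynomial.C r)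
      = ↑(sU q (-1) * Units.map (HahnSeries.ofPowerSeries ℤ (ZMod q)).toMonoidHom (psU q r)) := by
  have h1 : EH q (Polynomial.X + Polynomial.C r)
      = HahnSeries.single (-1) 1 + HahnSeries.C r := by
    simp [EH]
  have h2 : (HahnSeries.ofPowerSeries ℤ (ZMod q)) (psU q r : PowerSeries (ZMod q))
      = 1 + HahnSeries.single 1 r := by
    rw [psU_val, map_add, map_one, map_mul, HahnSeries.ofPowerSeries_X,
      HahnSeries.ofPowerSeries_C, HahnSeries.C_apply, HahnSeries.single_mul_single, one_mul,
      add_zero]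
  show EH q (Polynomial.X + Polynomial.C r)
      = HahnSeries.single (-1) 1
        * HahnSeries.ofPowerSeries ℤ (ZMod q) (psU q r : PowerSeries (ZMod q))
  rw [h1, h2, mul_add, mul_one, HahnSeries.single_mul_single, one_mul, neg_add_cancel,
    ← HahnSeries.C_apply]

lemma unitsE (d : ℕ) (l : Fin (d-1) → ZMod q) (y : dlSub q d l) :
    IsUnit (EH q (y : Polynomial (ZMod q))) := by
  obtain ⟨y, hy⟩ := y
  induction hy using Submonoid.closure_induction with
  | mem x hx =>
    obtain ⟨i, rfl⟩ := hx
    rw [EH_gen]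
    exact Units.isUnit _
  | one => rw [map_one]; exact isUnit_one
  | mul x z hx hz ihx ihz => rw [map_mul]; exact ihx.mul ihz

/-- The induced map `Rd → HahnSeries ℤ (ZMod q)`. -/
noncomputable def ΦH (d : ℕ) (l : Fin (d-1) → ZMod q) : Rd q d l →+* HahnSeries ℤ (ZMod q) :=
  IsLocalization.lift (unitsE q d l)

lemma phi_tU (d : ℕ) (l : Fin (d-1) → ZMod q) (i : Fin (d-1)) :
    Units.map (ΦH q d l).toMonoidHom (tU q d l i)
      = sU q (-1) * Units.map (HahnSeries.ofPowerSeries ℤ (ZMod q)).toMonoidHom (psU q (l i)) := by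
  apply Units.ext
  show ΦH q d l (tU q d l i : Rd q d l) = _
  have h : (tU q d l i : Rd q d l)
      = algebraMap (Polynomial (ZMod q)) (Rd q d l) (Polynomial.X + Polynomial.C (l i)) :=
    IsUnit.unit_spec _
  rw [h, ΦH, IsLocalization.lift_eq]
  exact EH_gen q (l i)

lemma phi_monU (d : ℕ) (l : Fin (d-1) → ZMod q) (v : Fin (d-1) → ℤ) :
    ∃ w : PowerSeries (ZMod q), PowerSeries.constantCoeff (R := ZMod q) w = 1 ∧
      ΦH q d l ↑(monU q d l v)
        = HahnSeries.single (-(∑ i, v i)) 1 * HahnSeries.ofPowerSeries ℤ (ZMod q) w := by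
  classical
  set W : (PowerSeries (ZMod q))ˣ := ∏ i, (psU q (l i)) ^ (v i) with hW
  refine ⟨(W : PowerSeries (ZMod q)), ?_, ?_⟩
  · have h1 : Units.map (PowerSeries.constantCoeff (R := ZMod q)).toMonoidHom W = 1 := by
      rw [hW, map_prod]
      refine Finset.prod_eq_one (fun i _ => ?_)
      rw [map_zpow, cc_psU_map, one_zpow]
    have h2 : (Units.map (PowerSeries.constantCoeff (R := ZMod q)).toMonoidHom W
        : ZMod q) = PowerSeries.constantCoeff (R := ZMod q) (W : PowerSeries (ZMod q)) := rfl
    rw [← h2, h1, Units.val_one]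
  · have h1 : Units.map (ΦH q d l).toMonoidHom (monU q d l v)
        = sU q (-(∑ i, v i))
          * Units.map (HahnSeries.ofPowerSeries ℤ (ZMod q)).toMonoidHom W := by
      rw [monU, map_prod]
      have h2 : ∀ i : Fin (d-1), Units.map (ΦH q d l).toMonoidHom (tU q d l i ^ (v i))
          = sU q (-(v i))
            * Units.map (HahnSeries.ofPowerSeries ℤ (ZMod q)).toMonoidHom ((psU q (l i)) ^ (v i)) := by
        intro i
        rw [map_zpow, phi_tU]
        calc (sU q (-1)
              * Units.map (HahnSeries.ofPowerSeries ℤ (ZMod q)).toMonoidHom (psU q (l i))) ^ (v i)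
            = (sU q (-1)) ^ (v i)
              * (Units.map (HahnSeries.ofPowerSeries ℤ (ZMod q)).toMonoidHom (psU q (l i)))
                ^ (v i) := by
              exact mul_zpow (sU q (-1))
                (Units.map (HahnSeries.ofPowerSeries ℤ (ZMod q)).toMonoidHom (psU q (l i))) (v i)
          _ = sU q (-(v i)) * Units.map (HahnSeries.ofPowerSeries ℤ (ZMod q)).toMonoidHom
                ((psU q (l i)) ^ (v i)) := by
              rw [sU_zpow, map_zpow, show (v i) * -1 = -(v i) by ring]
      rw [Finset.prod_congr rfl (fun i _ => h2 i), Finset.prod_mul_distrib, sU_sum,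
        show (∑ i, -(v i)) = -(∑ i, v i) by simp, hW, map_prod]
    have h3 : ΦH q d l ↑(monU q d l v)
        = (Units.map (ΦH q d l).toMonoidHom (monU q d l v) : HahnSeries ℤ (ZMod q)) := rfl
    rw [h3, h1, Units.val_mul]
    rfl

lemma coeff_hi (n : ℤ) (w : PowerSeries (ZMod q))
    (hw : PowerSeries.constantCoeff (R := ZMod q) w = 1) :
    (HahnSeries.single (-n) 1 * HahnSeries.ofPowerSeries ℤ (ZMod q) w).coeff (-n) = 1 := by
  have h := HahnSeries.coeff_single_mul_add (r := (1 : ZMod q))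
    (x := HahnSeries.ofPowerSeries ℤ (ZMod q) w) (a := 0) (b := -n)
  rw [zero_add, one_mul] at h
  rw [h]
  have h0 : ((0 : ℕ) : ℤ) = (0 : ℤ) := rfl
  rw [← h0, HahnSeries.ofPowerSeries_apply_coeff, PowerSeries.coeff_zero_eq_constantCoeff, hw]

lemma coeff_lo (n k : ℤ) (hk : k < -n) (w : PowerSeries (ZMod q)) :
    (HahnSeries.single (-n) 1 * HahnSeries.ofPowerSeries ℤ (ZMod q) w).coeff k = 0 := by
  have h := HahnSeries.coeff_single_mul_add (r := (1 : ZMod q))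
    (x := HahnSeries.ofPowerSeries ℤ (ZMod q) w) (a := k + n) (b := -n)
  have hkn : k + n + -n = k := by ring
  rw [hkn, one_mul] at h
  rw [h, HahnSeries.ofPowerSeries_apply, HahnSeries.embDomain_notin_range]
  rintro ⟨m, hm⟩
  have hm' : ((m : ℤ)) = k + n := hm
  omega

/-- The key pairwise constraint on exponent sums. -/
lemma pairwise_key (hq : 2 ≤ q) (c : ZMod q) (hc : IsUnit c) (a b : ℤ)
    (wa wb : PowerSeries (ZMod q))
    (hwa : PowerSeries.constantCoeff (R := ZMod q) wa = 1)
    (hwb : PowerSeries.constantCoeff (R := ZMod q) wb = 1)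
    (heq : HahnSeries.C c + HahnSeries.single (-a) 1 * HahnSeries.ofPowerSeries ℤ (ZMod q) wa
      - HahnSeries.single (-b) 1 * HahnSeries.ofPowerSeries ℤ (ZMod q) wb = 0) :
    (a = b ∧ 0 < a) ∨ (a = 0 ∧ b < 0) ∨ (b = 0 ∧ a < 0) := by
  haveI : Fact (1 < q) := ⟨by omega⟩
  have hc0 : c ≠ 0 := hc.ne_zero
  have hco : ∀ k : ℤ, (HahnSeries.single (0 : ℤ) c).coeff k
      + (HahnSeries.single (-a) 1 * HahnSeries.ofPowerSeries ℤ (ZMod q) wa).coeff k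
      - (HahnSeries.single (-b) 1 * HahnSeries.ofPowerSeries ℤ (ZMod q) wb).coeff k = 0 := by
    intro k
    have h := congrArg (fun x => HahnSeries.coeff x k) heq
    simpa [HahnSeries.coeff_sub, HahnSeries.coeff_add, HahnSeries.C_apply] using h
  rcases lt_trichotomy a b with hab | hab | hab
  · -- a < b ⇒ b = 0 (else contradiction), a < 0
    by_cases hb : b = 0
    · right; right; exact ⟨hb, by omega⟩
    · exfalso
      have h := hco (-b)
      rw [coeff_lo q a (-b) (by omega) wa, coeff_hi q b wb hwb,
        HahnSeries.coeff_single_of_ne (by omega : (-b : ℤ) ≠ 0)] at h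
      simp only [add_zero, zero_sub, neg_eq_zero] at h
      exact one_ne_zero h
  · -- a = b
    subst hab
    by_cases ha : 0 < a
    · exact Or.inl ⟨rfl, ha⟩
    · exfalso
      rcases eq_or_lt_of_le (not_lt.mp ha) with ha0 | ha0
      · subst ha0
        have h := hco 0
        have hA := coeff_hi q 0 wa hwa
        have hB := coeff_hi q 0 wb hwb
        rw [neg_zero] at hA hB h
        rw [hA, hB, HahnSeries.coeff_single_same] at h
        simp only [add_sub_cancel_right] at h
        exact hc0 h
      · have h := hco 0
        rw [coeff_lo q a 0 (by omega) wa, coeff_lo q a 0 (by omega) wb,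
          HahnSeries.coeff_single_same] at h
        simp only [add_zero, sub_zero] at h
        exact hc0 h
  · -- b < a ⇒ a = 0, b < 0
    by_cases ha : a = 0
    · right; left; exact ⟨ha, by omega⟩
    · exfalso
      have h := hco (-a)
      rw [coeff_hi q a wa hwa, coeff_lo q b (-a) (by omega) wb,
        HahnSeries.coeff_single_of_ne (by omega : (-a : ℤ) ≠ 0)] at h
      simp only [zero_add, sub_zero] at h
      exact one_ne_zero h

end Aux

/-- Lemma 3.4 (column sums).  If `β ∈ GL_{d-1}(ℤ)` satisfies the identities
`(l_j - l_i) + ∏_k (t+l_k)^(b_{k,i}) - ∏_k (t+l_k)^(b_{k,j}) = 0` in `R_d(ℤ_q)` for all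
`i ≠ j`, and `C i` denotes the `i`-th column sum of `β`, then at most one column sum is
negative, at most one column sum is zero, and if some column sum is positive then all
column sums are equal to it. -/
theorem statement8 (q d : ℕ) (hq : 2 ≤ q) (hd : 3 ≤ d) (l : Fin (d-1) → ZMod q)
    (hl0 : l ⟨0, by omega⟩ = 0)
    (hl : ∀ i j : Fin (d-1), i ≠ j → IsUnit (l i - l j))
    (β : Matrix.GeneralLinearGroup (Fin (d-1)) ℤ)
    (hβ : kCond q d l ↑β) :
    (∀ i i' : Fin (d-1),
        (∑ k, (β : Matrix (Fin (d-1)) (Fin (d-1)) ℤ) k i) < 0 →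
        (∑ k, (β : Matrix (Fin (d-1)) (Fin (d-1)) ℤ) k i') < 0 → i = i') ∧
    (∀ i i' : Fin (d-1),
        (∑ k, (β : Matrix (Fin (d-1)) (Fin (d-1)) ℤ) k i) = 0 →
        (∑ k, (β : Matrix (Fin (d-1)) (Fin (d-1)) ℤ) k i') = 0 → i = i') ∧
    (∀ i : Fin (d-1), 0 < (∑ k, (β : Matrix (Fin (d-1)) (Fin (d-1)) ℤ) k i) →
        ∀ j : Fin (d-1),
          (∑ k, (β : Matrix (Fin (d-1)) (Fin (d-1)) ℤ) k j)
            = ∑ k, (β : Matrix (Fin (d-1)) (Fin (d-1)) ℤ) k i) := by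
  classical
  have key : ∀ i j : Fin (d-1), i ≠ j →
      ((∑ k, (β : Matrix (Fin (d-1)) (Fin (d-1)) ℤ) k i)
          = (∑ k, (β : Matrix (Fin (d-1)) (Fin (d-1)) ℤ) k j)
        ∧ 0 < (∑ k, (β : Matrix (Fin (d-1)) (Fin (d-1)) ℤ) k i)) ∨
      ((∑ k, (β : Matrix (Fin (d-1)) (Fin (d-1)) ℤ) k i) = 0
        ∧ (∑ k, (β : Matrix (Fin (d-1)) (Fin (d-1)) ℤ) k j) < 0) ∨
      ((∑ k, (β : Matrix (Fin (d-1)) (Fin (d-1)) ℤ) k j) = 0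
        ∧ (∑ k, (β : Matrix (Fin (d-1)) (Fin (d-1)) ℤ) k i) < 0) := by
    intro i j hij
    have heq := hβ i j hij
    obtain ⟨wa, hwa, hA⟩ :=
      phi_monU q d l (fun k => (β : Matrix (Fin (d-1)) (Fin (d-1)) ℤ) k i)
    obtain ⟨wb, hwb, hB⟩ :=
      phi_monU q d l (fun k => (β : Matrix (Fin (d-1)) (Fin (d-1)) ℤ) k j)
    have h := congrArg (ΦH q d l) heq
    rw [map_sub, map_add, map_zero, hA, hB] at h
    have hC : ΦH q d l (algebraMap (Polynomial (ZMod q)) (Rd q d l)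
        (Polynomial.C (l j - l i))) = HahnSeries.C (l j - l i) := by
      rw [ΦH, IsLocalization.lift_eq]
      show Polynomial.eval₂ HahnSeries.C (HahnSeries.single (-1) 1)
        (Polynomial.C (l j - l i)) = _
      rw [Polynomial.eval₂_C]
    rw [hC] at h
    exact pairwise_key q hq (l j - l i) (hl j i hij.symm) _ _ wa wb hwa hwb h
  refine ⟨?_, ?_, ?_⟩
  · intro i i' h1 h2
    by_contra hne
    rcases key i i' hne with ⟨e, p⟩ | ⟨e, p⟩ | ⟨e, p⟩ <;> omega
  · intro i i' h1 h2
    by_contra hne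
    rcases key i i' hne with ⟨e, p⟩ | ⟨e, p⟩ | ⟨e, p⟩ <;> omega
  · intro i hi j
    by_cases hji : j = i
    · rw [hji]
    · rcases key j i hji with ⟨e, p⟩ | ⟨e, p⟩ | ⟨e, p⟩ <;> omega
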